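/- For $a > 1$, there is a constant $K_a$ such that $\int_0^t \frac{1}{(s+1)^a \sqrt{t-s}}\, ds \leq K_a/\sqrt{t}$ for all $t \geq 1$. -/

import Mathlib

open MeasureTheory intervalIntegral

theorem stmt15 (a : ℝ) (ha : 1 < a) :
    ∃ K : ℝ, ∀ t : ℝ, 1 ≤ t →
      (∫ s in (0:ℝ)..t, 1 / ((s + 1) ^ a * Real.sqrt (t - s)))
        ≤ K / Real.sqrt t := by
  refine ⟨Real.sqrt 2 / (a - 1) + 2 ^ (a + 1), fun t ht => ?_⟩
  have ht0 : (0:ℝ) < t := lt_of_lt_of_le one_pos ht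
  have hst : 0 < Real.sqrt t := Real.sqrt_pos.mpr ht0
  set g : ℝ → ℝ := fun s => Real.sqrt 2 / Real.sqrt t * (s + 1) ^ (-a)
      + (2 / t) ^ a * (t - s) ^ (-(1/2) : ℝ) with hgdef
  -- integrability pieces
  have hig1 : IntervalIntegrable (fun s : ℝ => (s + 1) ^ (-a)) volume 0 t := by
    apply ContinuousOn.intervalIntegrable
    apply ContinuousOn.rpow_const (by fun_prop)
    intro s hs
    rw [Set.uIcc_of_le ht0.le] at hs
    left; nlinarith [hs.1]
  have hig2 : IntervalIntegrable (fun s : ℝ => (t - s) ^ (-(1/2) : ℝ)) volume 0 t := by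
    have h := (intervalIntegral.intervalIntegrable_rpow' (a := 0) (b := t)
      (r := -(1/2)) (by norm_num)).comp_sub_left t
    simpa using h.symm
  have higg : IntervalIntegrable g volume 0 t :=
    ((hig1.const_mul _).add (hig2.const_mul _))
  -- pointwise bound on Ioc 0 t
  have hpt : ∀ s ∈ Set.Ioc (0:ℝ) t,
      1 / ((s + 1) ^ a * Real.sqrt (t - s)) ≤ g s := by
    intro s hs
    have hs1 : (0:ℝ) < s + 1 := by linarith [hs.1]
    have hsa : (0:ℝ) < (s + 1) ^ a := Real.rpow_pos_of_pos hs1 a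
    have hts : 0 ≤ t - s := by linarith [hs.2]
    rcases eq_or_lt_of_le hs.2 with he | hlt
    · -- s = t, integrand is 0
      have : Real.sqrt (t - s) = 0 := by rw [← he]; simp
      rw [this, mul_zero, div_zero]
      have h1 : 0 ≤ Real.sqrt 2 / Real.sqrt t * (s + 1) ^ (-a) := by positivity
      have h2 : 0 ≤ (2 / t) ^ a * (t - s) ^ (-(1/2) : ℝ) := by positivity
      simp only [hgdef]; linarith
    · have hts' : (0:ℝ) < t - s := by linarith
      rcases le_or_gt (t/2) (t - s) with hc | hc
      · -- first term dominates
        have key : 1 / ((s + 1) ^ a * Real.sqrt (t - s))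
            ≤ 1 / ((s + 1) ^ a * Real.sqrt (t/2)) := by
          gcongr
        have heq : 1 / ((s + 1) ^ a * Real.sqrt (t/2))
            = Real.sqrt 2 / Real.sqrt t * (s + 1) ^ (-a) := by
          have hsq : Real.sqrt (t/2) * Real.sqrt 2 = Real.sqrt t := by
            rw [← Real.sqrt_mul (by positivity)]; norm_num
          rw [Real.rpow_neg hs1.le]
          field_simp
          nlinarith [Real.sqrt_pos.mpr (show (0:ℝ) < t/2 by linarith),
            Real.sqrt_pos.mpr (show (0:ℝ) < 2 by norm_num), hsq]
        have h2 : 0 ≤ (2 / t) ^ a * (t - s) ^ (-(1/2) : ℝ) := by positivity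
        simp only [hgdef]
        calc 1 / ((s + 1) ^ a * Real.sqrt (t - s)) ≤ _ := key
          _ = _ := heq
          _ ≤ _ := by linarith
      · -- second term dominates; here t/2 < s
        have hs2 : t/2 ≤ s + 1 := by linarith
        have ht2 : (0:ℝ) < t/2 := by linarith
        have key : 1 / ((s + 1) ^ a * Real.sqrt (t - s))
            ≤ 1 / ((t/2) ^ a * Real.sqrt (t - s)) := by
          have := Real.rpow_le_rpow ht2.le hs2 (by linarith : (0:ℝ) ≤ a)
          gcongr
        have heq : 1 / ((t/2) ^ a * Real.sqrt (t - s))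
            = (2 / t) ^ a * (t - s) ^ (-(1/2) : ℝ) := by
          rw [Real.rpow_neg hts, ← Real.sqrt_eq_rpow,
            show (2/t : ℝ) = (t/2)⁻¹ by field_simp,
            Real.inv_rpow ht2.le, one_div, mul_inv]
        have h1 : 0 ≤ Real.sqrt 2 / Real.sqrt t * (s + 1) ^ (-a) := by positivity
        simp only [hgdef]
        calc 1 / ((s + 1) ^ a * Real.sqrt (t - s)) ≤ _ := key
          _ = _ := heq
          _ ≤ _ := by linarith
  -- compare integrals
  have hmono : (∫ s in (0:ℝ)..t, 1 / ((s + 1) ^ a * Real.sqrt (t - s)))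
      ≤ ∫ s in (0:ℝ)..t, g s := by
    rw [intervalIntegral.integral_of_le ht0.le, intervalIntegral.integral_of_le ht0.le]
    apply integral_mono_of_nonneg
    · filter_upwards [ae_restrict_mem measurableSet_Ioc] with s hs
      have hs1 : (0:ℝ) < s + 1 := by linarith [hs.1]
      have : (0:ℝ) ≤ t - s := by linarith [hs.2]
      positivity
    · exact (intervalIntegrable_iff_integrableOn_Ioc_of_le ht0.le).mp higg
    · filter_upwards [ae_restrict_mem measurableSet_Ioc] with s hs
      exact hpt s hs
  -- compute ∫ g
  have hI1 : (∫ s in (0:ℝ)..t, (s + 1) ^ (-a)) ≤ 1 / (a - 1) := by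
    have hc : (∫ s in (0:ℝ)..t, (s + 1) ^ (-a))
        = ((t+1) ^ (-a+1) - 1 ^ (-a+1)) / (-a+1) := by
      rw [show (∫ s in (0:ℝ)..t, (s+1)^(-a))
          = ∫ x in (0+1:ℝ)..(t+1), x ^ (-a) from
        intervalIntegral.integral_comp_add_right (fun x : ℝ => x ^ (-a)) 1]
      rw [integral_rpow (Or.inr ⟨by linarith, by
        rw [Set.uIcc_of_le (by linarith : (0+1:ℝ) ≤ t + 1)]
        intro h; have := h.1; norm_num at this⟩)]
      norm_num
    rw [hc, Real.one_rpow, div_le_iff_of_neg (by linarith : -a+1 < 0)]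
    have hnn := Real.rpow_nonneg (show (0:ℝ) ≤ t+1 by linarith) (-a+1)
    have h1 : 1 / (a-1) * (-a+1) = -1 := by
      rw [div_mul_eq_mul_div, one_mul, div_eq_iff (by intro h; nlinarith : a - 1 ≠ 0)]; ring
    rw [h1]; linarith
  have hI2 : (∫ s in (0:ℝ)..t, (t - s) ^ (-(1/2) : ℝ)) = 2 * Real.sqrt t := by
    rw [intervalIntegral.integral_comp_sub_left (fun x : ℝ => x ^ (-(1/2):ℝ)) t]
    simp only [sub_self, sub_zero]
    rw [integral_rpow (Or.inl (by norm_num))]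
    rw [Real.zero_rpow (by norm_num), Real.sqrt_eq_rpow]
    norm_num
    ring
  have hgint : (∫ s in (0:ℝ)..t, g s)
      = Real.sqrt 2 / Real.sqrt t * (∫ s in (0:ℝ)..t, (s+1) ^ (-a))
        + (2/t) ^ a * (∫ s in (0:ℝ)..t, (t - s) ^ (-(1/2):ℝ)) := by
    simp only [hgdef]
    rw [intervalIntegral.integral_add (hig1.const_mul _) (hig2.const_mul _),
      intervalIntegral.integral_const_mul, intervalIntegral.integral_const_mul]
  -- final arithmetic
  have hbound1 : Real.sqrt 2 / Real.sqrt t * (∫ s in (0:ℝ)..t, (s+1) ^ (-a))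
      ≤ (Real.sqrt 2 / (a-1)) / Real.sqrt t := by
    have : Real.sqrt 2 / Real.sqrt t * (1/(a-1)) = (Real.sqrt 2 / (a-1)) / Real.sqrt t := by
      field_simp
    rw [← this]
    have h0 : (0:ℝ) ≤ Real.sqrt 2 / Real.sqrt t := by positivity
    exact mul_le_mul_of_nonneg_left hI1 h0
  have hbound2 : (2/t) ^ a * (∫ s in (0:ℝ)..t, (t - s) ^ (-(1/2):ℝ))
      ≤ (2:ℝ) ^ (a+1) / Real.sqrt t := by
    rw [hI2, Real.div_rpow (by norm_num) ht0.le,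
      Real.rpow_add (by norm_num : (0:ℝ) < 2) a 1, Real.rpow_one]
    rw [div_mul_eq_mul_div, div_le_div_iff₀ (by positivity) hst]
    have hta : t ≤ t ^ a := by
      nth_rewrite 1 [show t = t ^ (1:ℝ) by rw [Real.rpow_one]]
      exact Real.rpow_le_rpow_of_exponent_le ht ha.le
    have hss : Real.sqrt t * Real.sqrt t = t := Real.mul_self_sqrt ht0.le
    have h2a : (0:ℝ) < (2:ℝ) ^ a := Real.rpow_pos_of_pos (by norm_num) a
    nlinarith
  calc (∫ s in (0:ℝ)..t, 1 / ((s + 1) ^ a * Real.sqrt (t - s)))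
      ≤ ∫ s in (0:ℝ)..t, g s := hmono
    _ = _ := hgint
    _ ≤ (Real.sqrt 2 / (a-1)) / Real.sqrt t + (2:ℝ) ^ (a+1) / Real.sqrt t := by
        linarith
    _ = (Real.sqrt 2 / (a - 1) + 2 ^ (a + 1)) / Real.sqrt t := by
        rw [← add_div]
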